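/- arXiv:2604.06525 — 5 statements merged into one kernel-verified Lean document; each statement's English description precedes it below -/
import Mathlib

section
/- Fix scalars η_{k-1}, η_k > 0, γ_{k-1}, γ_k ≥ 0, β_{k-1} ∈ [0,1), β_k ∈ (0,1), points y₀, y_{k-2} ∈ H, z_{k-1}, z_k ∈ X, and vectors G_{k-1}, G_k ∈ H. Define y_{k-1} := (1-β_{k-1})·y_{k-2} + β_{k-1}·z_{k-1} and y_k := (1-β_k)·y_{k-1} + β_k·z_k. Assume the optimality conditions: (i) for all z ∈ X, ⟨G_k + η_k⁻¹(z_k - y_{k-1}) + η_k⁻¹γ_k(z_k - y₀), z - z_k⟩ ≥ h(z_k) - h(z); (ii) for all z ∈ X, ⟨G_{k-1} + η_{k-1}⁻¹(z_{k-1} - y_{k-2}) + η_{k-1}⁻¹γ_{k-1}(z_{k-1} - y₀), z - z_{k-1}⟩ ≥ h(z_{k-1}) - h(z); and the stepsize condition η_k ≤ 2(1-β_{k-1})(1-β_k)·η_{k-1}. Then for every z ∈ X: η_k⟨G_k, z_{k-1} - z⟩ + η_k(h(z_{k-1}) - h(z)) + ((1+γ_k(1-β_k))/2)·‖z_k - y_{k-1}‖²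 ≤ ((1+γ_k(1-β_k))/(2β_k))·‖y_{k-1} - z‖² - ((1+γ_k)/(2β_k))·‖y_k - z‖² + η_k⟨G_k - G_{k-1}, z_{k-1} - z_k⟩ + (γ_k/2)·‖y₀ - z‖² - (γ_k/2 - η_k·γ_{k-1}/(4η_{k-1}))·‖z_k - y₀‖². -/
open scoped RealInnerProductSpace

lemma aux_quarter {H : Type*} [NormedAddCommGroup H] [InnerProductSpace ℝ H]
    (a b : H) : ⟪a, b - a⟫ ≤ (1/4) * ‖b‖ ^ 2 := by
  have h0 : (0:ℝ) ≤ ‖(1/2:ℝ) • b - a‖ ^ 2 := sq_nonneg _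
  have e : ‖(1/2:ℝ) • b - a‖ ^ 2 = (1/4) * ‖b‖ ^ 2 - ⟪b, a⟫ + ‖a‖ ^ 2 := by
    simp only [← real_inner_self_eq_norm_sq, inner_sub_left, inner_sub_right,
      real_inner_smul_left, real_inner_smul_right, real_inner_comm a b]
    ring
  have e2 : ⟪a, b - a⟫ = ⟪b, a⟫ - ‖a‖ ^ 2 := by
    simp only [← real_inner_self_eq_norm_sq, inner_sub_right, real_inner_comm a b]
  rw [e] at h0
  linarith [e2, h0]

/-- Lemma 4.4 (one-step optimality inequality for stochastic AC-FGM). -/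
theorem stmt0 {H : Type*} [NormedAddCommGroup H] [InnerProductSpace ℝ H]
    (X : Set H) (h : H → ℝ)
    (ηkm ηk γkm γk βkm βk : ℝ)
    (y₀ ykm2 : H) (zkm zk : H) (Gkm Gk : H)
    (hηkm : 0 < ηkm) (hηk : 0 < ηk)
    (hγkm : 0 ≤ γkm) (hγk : 0 ≤ γk)
    (hβkm : βkm ∈ Set.Ico (0:ℝ) 1) (hβk : βk ∈ Set.Ioo (0:ℝ) 1)
    (hzkm : zkm ∈ X) (hzk : zk ∈ X)
    (ykm : H) (hykm : ykm = (1 - βkm) • ykm2 + βkm • zkm)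
    (yk : H) (hyk : yk = (1 - βk) • ykm + βk • zk)
    (hopt_k : ∀ z ∈ X,
      ⟪Gk + ηk⁻¹ • (zk - ykm) + (ηk⁻¹ * γk) • (zk - y₀), z - zk⟫ ≥ h zk - h z)
    (hopt_km : ∀ z ∈ X,
      ⟪Gkm + ηkm⁻¹ • (zkm - ykm2) + (ηkm⁻¹ * γkm) • (zkm - y₀), z - zkm⟫ ≥ h zkm - h z)
    (hstep : ηk ≤ 2 * (1 - βkm) * (1 - βk) * ηkm) :
    ∀ z ∈ X,
      ηk * ⟪Gk, zkm - z⟫ + ηk * (h zkm - h z)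
          + ((1 + γk * (1 - βk)) / 2) * ‖zk - ykm‖ ^ 2
        ≤ ((1 + γk * (1 - βk)) / (2 * βk)) * ‖ykm - z‖ ^ 2
          - ((1 + γk) / (2 * βk)) * ‖yk - z‖ ^ 2
          + ηk * ⟪Gk - Gkm, zkm - zk⟫
          + (γk / 2) * ‖y₀ - z‖ ^ 2
          - (γk / 2 - ηk * γkm / (4 * ηkm)) * ‖zk - y₀‖ ^ 2 := by
  obtain ⟨hβk0, hβk1⟩ := hβk
  obtain ⟨hβkm0, hβkm1⟩ := hβkm
  intro z hz
  have hbm : (0:ℝ) < 1 - βkm := by linarith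
  -- scaled optimality inequality at step k
  have A1 : ηk * (h zk - h z) ≤ ηk * ⟪Gk, z - zk⟫ + ⟪zk - ykm, z - zk⟫
      + γk * ⟪zk - y₀, z - zk⟫ := by
    have t := hopt_k z hz
    rw [inner_add_left, inner_add_left, real_inner_smul_left, real_inner_smul_left] at t
    have t2 := mul_le_mul_of_nonneg_left t hηk.le
    have e : ηk * (⟪Gk, z - zk⟫ + ηk⁻¹ * ⟪zk - ykm, z - zk⟫
        + ηk⁻¹ * γk * ⟪zk - y₀, z - zk⟫)
        = ηk * ⟪Gk, z - zk⟫ + ⟪zk - ykm, z - zk⟫ + γk * ⟪zk - y₀, z - zk⟫ := by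
      field_simp
    linarith [e ▸ t2]
  -- scaled optimality inequality at step k-1, evaluated at zk
  have hzy : zkm - ykm2 = (1 - βkm)⁻¹ • (zkm - ykm) := by
    have h1 : zkm - ykm = (1 - βkm) • (zkm - ykm2) := by rw [hykm]; module
    rw [h1, smul_smul, inv_mul_cancel₀ hbm.ne', one_smul]
  have A2 : ηk * (h zkm - h zk) ≤ ηk * ⟪Gkm, zk - zkm⟫
      + (ηk / (ηkm * (1 - βkm))) * ⟪zkm - ykm, zk - zkm⟫
      + (ηk * γkm / ηkm) * ⟪zkm - y₀, zk - zkm⟫ := by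
    have t := hopt_km zk hzk
    rw [hzy, inner_add_left, inner_add_left, real_inner_smul_left, real_inner_smul_left,
      real_inner_smul_left] at t
    have t2 := mul_le_mul_of_nonneg_left t hηk.le
    have e : ηk * (⟪Gkm, zk - zkm⟫ + ηkm⁻¹ * ((1 - βkm)⁻¹ * ⟪zkm - ykm, zk - zkm⟫)
        + ηkm⁻¹ * γkm * ⟪zkm - y₀, zk - zkm⟫)
        = ηk * ⟪Gkm, zk - zkm⟫ + (ηk / (ηkm * (1 - βkm))) * ⟪zkm - ykm, zk - zkm⟫
          + (ηk * γkm / ηkm) * ⟪zkm - y₀, zk - zkm⟫ := by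
      field_simp
    linarith [e ▸ t2]
  -- bound on the first cross term
  have C' : (ηk / (ηkm * (1 - βkm))) * ⟪zkm - ykm, zk - zkm⟫
      ≤ ((1 - βk) / 2) * ‖zk - ykm‖ ^ 2 := by
    have q := aux_quarter (zkm - ykm) (zk - ykm)
    have e : (zk - ykm) - (zkm - ykm) = zk - zkm := by abel
    rw [e] at q
    have hc1 : 0 ≤ ηk / (ηkm * (1 - βkm)) := by positivity
    have hc1' : ηk / (ηkm * (1 - βkm)) ≤ 2 * (1 - βk) := by
      rw [div_le_iff₀ (by positivity)]
      nlinarith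
    nlinarith [mul_le_mul_of_nonneg_left q hc1,
      mul_le_mul_of_nonneg_right hc1' (by positivity : (0:ℝ) ≤ (1/4) * ‖zk - ykm‖ ^ 2)]
  -- bound on the second cross term
  have D : (ηk * γkm / ηkm) * ⟪zkm - y₀, zk - zkm⟫
      ≤ (ηk * γkm / (4 * ηkm)) * ‖zk - y₀‖ ^ 2 := by
    have q := aux_quarter (zkm - y₀) (zk - y₀)
    have e : (zk - y₀) - (zkm - y₀) = zk - zkm := by abel
    rw [e] at q
    have hc2 : 0 ≤ ηk * γkm / ηkm := by positivity
    have e4 : ηk * γkm / (4 * ηkm) = ηk * γkm / ηkm / 4 := by ring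
    rw [e4]
    nlinarith [mul_le_mul_of_nonneg_left q hc2]
  have hyk' : yk - z = (1 - βk) • (ykm - z) + βk • (zk - z) := by rw [hyk]; module
  -- exact identity
  have Id : ⟪zk - ykm, z - zk⟫ + γk * ⟪zk - y₀, z - zk⟫
      + ((1 - βk) / 2) * ‖zk - ykm‖ ^ 2 + ((1 + γk * (1 - βk)) / 2) * ‖zk - ykm‖ ^ 2
      = ((1 + γk * (1 - βk)) / (2 * βk)) * ‖ykm - z‖ ^ 2
        - ((1 + γk) / (2 * βk)) * ‖(1 - βk) • (ykm - z) + βk • (zk - z)‖ ^ 2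
        + (γk / 2) * ‖y₀ - z‖ ^ 2 - (γk / 2) * ‖zk - y₀‖ ^ 2 := by
    simp only [← real_inner_self_eq_norm_sq, inner_sub_left, inner_sub_right,
      inner_add_left, inner_add_right, real_inner_smul_left, real_inner_smul_right,
      real_inner_comm ykm zk, real_inner_comm y₀ zk, real_inner_comm z zk,
      real_inner_comm y₀ ykm, real_inner_comm z ykm, real_inner_comm z y₀]
    field_simp
    ring
  have eqG : ηk * ⟪Gk, zkm - z⟫ + ηk * ⟪Gk, z - zk⟫ + ηk * ⟪Gkm, zk - zkm⟫
      = ηk * ⟪Gk - Gkm, zkm - zk⟫ := by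
    simp only [inner_sub_left, inner_sub_right]
    ring
  rw [hyk']
  linarith [A1, A2, C', D, Id, eqG]
end

section
/- Let η₁ > 0, γ₁ ≥ 0, x₀ ∈ X, G₁ ∈ H, and let z₁ ∈ X satisfy the optimality condition: for all z ∈ X, ⟨G₁ + ((1+γ₁)/η₁)·(z₁ - x₀), z - z₁⟩ ≥ h(z₁) - h(z). Let s₀ ∈ H satisfy the subgradient inequality h(z) ≥ h(x₀) + ⟨s₀, z - x₀⟩ for all z ∈ X. Then for every x* ∈ X: (1/2)·‖z₁ - x₀‖² + ‖z₁ - x*‖² ≤ (2η₁/(1+γ₁))·[ (η₁/(1+γ₁))·‖G₁ + s₀‖² + ⟨G₁, x* - x₀⟩ + h(x*) - h(x₀) ] + ‖x₀ - x*‖². -/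
open scoped RealInnerProductSpace

/-- Bound on the initial optimality gap (proof of Proposition 4.5). -/
theorem stmt2 {H : Type*} [NormedAddCommGroup H] [InnerProductSpace ℝ H]
    (X : Set H) (h : H → ℝ)
    (η₁ γ₁ : ℝ) (hη₁ : 0 < η₁) (hγ₁ : 0 ≤ γ₁)
    (x₀ : H) (hx₀ : x₀ ∈ X) (G₁ : H) (z₁ : H) (hz₁ : z₁ ∈ X)
    (hopt : ∀ z ∈ X, ⟪G₁ + ((1 + γ₁) / η₁) • (z₁ - x₀), z - z₁⟫ ≥ h z₁ - h z)
    (s₀ : H) (hs₀ : ∀ z ∈ X, h z ≥ h x₀ + ⟪s₀, z - x₀⟫) :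
    ∀ xstar ∈ X,
      (1 / 2) * ‖z₁ - x₀‖ ^ 2 + ‖z₁ - xstar‖ ^ 2
        ≤ (2 * η₁ / (1 + γ₁)) *
            ((η₁ / (1 + γ₁)) * ‖G₁ + s₀‖ ^ 2 + ⟪G₁, xstar - x₀⟫ + h xstar - h x₀)
          + ‖x₀ - xstar‖ ^ 2 := by
  intro xstar hxs
  have hc : (0:ℝ) < 1 + γ₁ := by linarith
  set t : ℝ := η₁ / (1 + γ₁) with ht
  have htpos : 0 < t := div_pos hη₁ hc
  have hτt : ((1 + γ₁) / η₁) * t = 1 := by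
    rw [ht]; field_simp
  have h2t : 2 * η₁ / (1 + γ₁) = 2 * t := by rw [ht]; ring
  have P1 := hopt xstar hxs
  have P2 := hs₀ z₁ hz₁
  have e1 : ⟪G₁ + ((1 + γ₁) / η₁) • (z₁ - x₀), xstar - z₁⟫
      = ⟪G₁, xstar - z₁⟫ + ((1 + γ₁) / η₁) * ⟪z₁ - x₀, xstar - z₁⟫ := by
    rw [inner_add_left, real_inner_smul_left]
  rw [e1] at P1
  have P1' : t * ⟪G₁, xstar - z₁⟫ + ⟪z₁ - x₀, xstar - z₁⟫
      ≥ t * (h z₁ - h xstar) := by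
    have h1 := mul_le_mul_of_nonneg_left P1 htpos.le
    have h2 : t * (⟪G₁, xstar - z₁⟫ + (1 + γ₁) / η₁ * ⟪z₁ - x₀, xstar - z₁⟫)
        = t * ⟪G₁, xstar - z₁⟫ + ⟪z₁ - x₀, xstar - z₁⟫ := by
      rw [ht]; field_simp
    linarith [h1, h2.le, h2.ge]
  have e2 : ⟪G₁, xstar - z₁⟫ = ⟪G₁, xstar - x₀⟫ + ⟪G₁, x₀ - z₁⟫ := by
    have : xstar - z₁ = (xstar - x₀) + (x₀ - z₁) := by abel
    rw [this, inner_add_right]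
  have e3 : ‖x₀ - xstar‖ ^ 2
      = ‖x₀ - z₁‖ ^ 2 + 2 * ⟪x₀ - z₁, z₁ - xstar⟫ + ‖z₁ - xstar‖ ^ 2 := by
    have huv : x₀ - xstar = (x₀ - z₁) + (z₁ - xstar) := by abel
    rw [huv, @norm_add_sq_real]
  have e4 : ⟪z₁ - x₀, xstar - z₁⟫ = ⟪x₀ - z₁, z₁ - xstar⟫ := by
    have h1 : z₁ - x₀ = -(x₀ - z₁) := by abel
    have h2 : xstar - z₁ = -(z₁ - xstar) := by abel
    rw [h1, h2, inner_neg_neg]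
  have e5 : ⟪G₁ + s₀, x₀ - z₁⟫ = ⟪G₁, x₀ - z₁⟫ - ⟪s₀, z₁ - x₀⟫ := by
    have h1 : x₀ - z₁ = -(z₁ - x₀) := by abel
    rw [inner_add_left, h1]
    simp only [inner_neg_right]
    ring
  have hCS : ⟪G₁ + s₀, x₀ - z₁⟫ ≤ ‖G₁ + s₀‖ * ‖x₀ - z₁‖ :=
    real_inner_le_norm _ _
  have hn : ‖x₀ - z₁‖ = ‖z₁ - x₀‖ := norm_sub_rev _ _
  rw [h2t]
  rw [e2] at P1'
  rw [e5, hn] at hCS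
  rw [e4] at P1'
  rw [hn] at e3
  nlinarith [sq_nonneg (2 * t * ‖G₁ + s₀‖ - ‖z₁ - x₀‖), e3,
    mul_le_mul_of_nonneg_left hCS (by linarith : (0:ℝ) ≤ 2 * t),
    mul_le_mul_of_nonneg_left P2 htpos.le, htpos]
end

section
/- Let β ∈ (0,1), η₁ > 0, and let (L̄_k)_{k≥1} be a sequence of positive reals. Define the stepsizes recursively by η₂ := min(1/(16·L̄₁), 2(1-β)·η₁) and, for every k ≥ 2, η_{k+1} := min(k/(16·L̄_k), (k+1)·η_k/k). For N ≥ 2 define L̂_{N-1} := max(1/(32(1-β)·η₁), L̄₁, L̄₂, …, L̄_{N-1}). Then for every N ≥ 2, η_N ≥ N/(32·L̂_{N-1}). -/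
/-- Lemma 4.6: lower bound on the adaptive stepsizes of stochastic AC-FGM. -/
theorem stmt3 (β η₁ : ℝ) (hβ : β ∈ Set.Ioo (0:ℝ) 1) (hη₁ : 0 < η₁)
    (Lbar : ℕ → ℝ) (hLbar : ∀ k, 1 ≤ k → 0 < Lbar k)
    (η : ℕ → ℝ) (hη₁' : η 1 = η₁)
    (hη₂ : η 2 = min (1 / (16 * Lbar 1)) (2 * (1 - β) * η₁))
    (hrec : ∀ k, 2 ≤ k →
      η (k + 1) = min ((k : ℝ) / (16 * Lbar k)) (((k : ℝ) + 1) * η k / (k : ℝ))) :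
    ∀ N : ℕ, ∀ _hN : 2 ≤ N,
      η N ≥ (N : ℝ) /
        (32 * max (1 / (32 * (1 - β) * η₁))
          ((Finset.Icc 1 (N - 1)).sup' (Finset.nonempty_Icc.mpr (by omega)) Lbar)) := by
  have hβ1 : (0:ℝ) < 1 - β := by have := hβ.2; linarith
  set A : ℝ := 1 / (32 * (1 - β) * η₁) with hA
  have hApos : 0 < A := by positivity
  intro N hN
  induction N, hN using Nat.le_induction with
  | base =>
      have h1 : (Finset.Icc 1 (2 - 1)).sup'
          (Finset.nonempty_Icc.mpr (by omega)) Lbar = Lbar 1 := by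
        norm_num
      rw [h1, hη₂]
      have hL1 : 0 < Lbar 1 := hLbar 1 le_rfl
      have hM : 0 < max A (Lbar 1) := lt_max_of_lt_left hApos
      rw [ge_iff_le, le_min_iff]
      constructor
      · rw [div_le_div_iff₀ (by positivity) (by positivity)]
        have : Lbar 1 ≤ max A (Lbar 1) := le_max_right _ _
        push_cast
        nlinarith
      · rw [div_le_iff₀ (by positivity)]
        have hAle : A ≤ max A (Lbar 1) := le_max_left _ _
        have : (2:ℝ) = 2 * (1 - β) * η₁ * (32 * A) := by
          rw [hA]; field_simp
        push_cast
        nlinarith [mul_le_mul_of_nonneg_left hAle (by positivity : (0:ℝ) ≤ 32 * (2 * (1 - β) * η₁))]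
  | succ k hk ih =>
      have hk1 : (1:ℝ) ≤ (k:ℝ) := by exact_mod_cast Nat.one_le_of_lt hk
      have hkpos : (0:ℝ) < k := by linarith
      have hLk : 0 < Lbar k := hLbar k (by omega)
      have hsub : Finset.Icc 1 (k - 1) ⊆ Finset.Icc 1 (k + 1 - 1) := by
        apply Finset.Icc_subset_Icc_right; omega
      set S := (Finset.Icc 1 (k + 1 - 1)).sup'
          (Finset.nonempty_Icc.mpr (by omega)) Lbar with hS
      have hSk : Lbar k ≤ S := by
        apply Finset.le_sup'
        simp [Finset.mem_Icc]; omega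
      have hSmono : (Finset.Icc 1 (k - 1)).sup'
          (Finset.nonempty_Icc.mpr (by omega)) Lbar ≤ S := by
        rw [hS]; exact Finset.sup'_mono Lbar hsub _
      set M := max A S with hM
      have hMpos : 0 < M := lt_max_of_lt_left hApos
      have hSM : Lbar k ≤ M := hSk.trans (le_max_right _ _)
      set Mprev := max A ((Finset.Icc 1 (k - 1)).sup'
          (Finset.nonempty_Icc.mpr (by omega)) Lbar) with hMprev
      have hMprevpos : 0 < Mprev := lt_max_of_lt_left hApos
      have hMle : Mprev ≤ M := max_le_max le_rfl hSmono
      have ih' : (k : ℝ) / (32 * Mprev) ≤ η k := ih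
      rw [hrec k hk, ge_iff_le, le_min_iff]
      push_cast
      constructor
      · rw [div_le_div_iff₀ (by positivity) (by positivity)]
        nlinarith
      · have h1 : ((k:ℝ) + 1) / (32 * M) ≤ ((k:ℝ) + 1) / (32 * Mprev) := by
          apply div_le_div_of_nonneg_left (by linarith) (by positivity)
          nlinarith
        refine h1.trans ?_
        rw [div_le_div_iff₀ (by positivity) hkpos]
        have := mul_le_mul_of_nonneg_left ih' (by positivity : (0:ℝ) ≤ (k+1) * (32 * Mprev))
        calc ((k:ℝ) + 1) * k = ((k:ℝ)+1) * (32 * Mprev) * ((k:ℝ)/(32*Mprev)) := by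
              field_simp
          _ ≤ ((k:ℝ)+1) * (32 * Mprev) * η k := this
          _ = ((k:ℝ)+1) * η k * (32 * Mprev) := by ring
end

section
/- For every real β with 0 < β ≤ 1 and every integer k ≥ 1, the product ∏_{s=3}^{k+1} (s-β)/s satisfies ∏_{s=3}^{k+1} (s-β)/s ≥ (2/(k+1))^β. (For k = 1 the product is empty and equals 1.) -/
/-- Equation (4.30): lower bound on the convergence-rate factor
`Γ_k = ∏_{s=3}^{k+1} (s-β)/s ≥ (2/(k+1))^β`. -/
theorem stmt4 (β : ℝ) (hβ0 : 0 < β) (hβ1 : β ≤ 1) (k : ℕ) (hk : 1 ≤ k) :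
    (∏ s ∈ Finset.Icc 3 (k + 1), (((s : ℝ) - β) / (s : ℝ)))
      ≥ (2 / ((k : ℝ) + 1)) ^ β := by
  induction k with
  | zero => omega
  | succ n ih =>
    rcases Nat.eq_or_lt_of_le hk with h1 | h1
    · simp only [← h1]
      norm_num
    · have hn : 1 ≤ n := by omega
      have ihn := ih hn
      have hnpos : (0:ℝ) < (n:ℝ) + 2 := by positivity
      have hprod : (∏ s ∈ Finset.Icc 3 (n + 1 + 1), (((s : ℝ) - β) / (s : ℝ)))
          = (∏ s ∈ Finset.Icc 3 (n + 1), (((s : ℝ) - β) / (s : ℝ)))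
            * ((((n:ℝ)+2) - β) / ((n:ℝ)+2)) := by
        rw [show n + 1 + 1 = (n + 1) + 1 from rfl,
          Finset.prod_Icc_succ_top (by omega)]
        push_cast; ring
      rw [hprod]
      -- key: (( (n+1)/(n+2) ))^β ≤ ((n+2)-β)/(n+2)
      have key : (((n:ℝ)+1)/((n:ℝ)+2)) ^ β ≤ (((n:ℝ)+2) - β) / ((n:ℝ)+2) := by
        have hs : (-1:ℝ) ≤ -(1/((n:ℝ)+2)) := by
          rw [neg_le_neg_iff]
          rw [div_le_one hnpos]; linarith
        have := rpow_one_add_le_one_add_mul_self hs hβ0.le hβ1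
        have heq : (1:ℝ) + -(1/((n:ℝ)+2)) = ((n:ℝ)+1)/((n:ℝ)+2) := by
          field_simp
          ring
        rw [heq] at this
        calc (((n:ℝ)+1)/((n:ℝ)+2)) ^ β ≤ 1 + β * -(1/((n:ℝ)+2)) := this
          _ = (((n:ℝ)+2) - β) / ((n:ℝ)+2) := by field_simp; ring
      have h2 : (2 / ((n:ℝ) + 1 + 1)) ^ β
          = (2 / ((n:ℝ)+1)) ^ β * (((n:ℝ)+1)/((n:ℝ)+2)) ^ β := by
        rw [← Real.mul_rpow (by positivity) (by positivity)]
        congr 1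
        field_simp
        ring
      push_cast
      rw [ge_iff_le, h2]
      have hΓpos : (0:ℝ) ≤ ∏ s ∈ Finset.Icc 3 (n + 1), (((s : ℝ) - β) / (s : ℝ)) := by
        apply Finset.prod_nonneg
        intro s hs
        simp only [Finset.mem_Icc] at hs
        have : (3:ℝ) ≤ (s:ℝ) := by exact_mod_cast hs.1
        apply div_nonneg (by linarith) (by linarith)
      exact mul_le_mul ihn key (by positivity) hΓpos
end

section
/- Let β ∈ (0,1) and for each integer k ≥ 1 define Γ_k := ∏_{s=3}^{k+1} (s-β)/s (with Γ_1 = 1, the empty product). Then for every integer N ≥ 1, ∑_{k=2}^{N+1} β/((k+1)·Γ_k) ≤ ((N+2)/2)^β. -/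
/-- Equation (4.31): summation bound for the anchored regularization terms. -/
theorem stmt5 (β : ℝ) (hβ : β ∈ Set.Ioo (0:ℝ) 1)
    (Γ : ℕ → ℝ)
    (hΓ : ∀ k, 1 ≤ k → Γ k = ∏ s ∈ Finset.Icc 3 (k + 1), (((s : ℝ) - β) / (s : ℝ))) :
    ∀ N : ℕ, 1 ≤ N →
      (∑ k ∈ Finset.Icc 2 (N + 1), β / (((k : ℝ) + 1) * Γ k))
        ≤ (((N : ℝ) + 2) / 2) ^ β := by
  obtain ⟨hβ0, hβ1⟩ := hβ
  intro N hN
  set P : ℕ → ℝ := fun k => ∏ s ∈ Finset.Icc 3 (k+1), ((s:ℝ) / ((s:ℝ) - β)) with hP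
  have hfacpos : ∀ s : ℕ, 3 ≤ s → (0:ℝ) < (s:ℝ) - β := by
    intro s hs
    have : (3:ℝ) ≤ s := by exact_mod_cast hs
    linarith
  have hspos : ∀ s : ℕ, 3 ≤ s → (0:ℝ) < (s:ℝ) := by
    intro s hs
    have : (3:ℝ) ≤ s := by exact_mod_cast hs
    linarith
  have hPpos : ∀ k, 0 < P k := by
    intro k
    apply Finset.prod_pos
    intro s hs
    simp only [Finset.mem_Icc] at hs
    exact div_pos (hspos s hs.1) (hfacpos s hs.1)
  have hΓpos : ∀ k, 1 ≤ k → 0 < Γ k := by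
    intro k hk
    rw [hΓ k hk]
    apply Finset.prod_pos
    intro s hs
    simp only [Finset.mem_Icc] at hs
    exact div_pos (hfacpos s hs.1) (hspos s hs.1)
  have hΓP : ∀ k, 1 ≤ k → Γ k * P k = 1 := by
    intro k hk
    rw [hΓ k hk, hP]
    simp only
    rw [← Finset.prod_mul_distrib]
    apply Finset.prod_eq_one
    intro s hs
    simp only [Finset.mem_Icc] at hs
    have h1 := hfacpos s hs.1
    have h2 := hspos s hs.1
    field_simp
  -- recursion for P and Γ
  have hPrec : ∀ m : ℕ, P (m + 2) = P (m + 1) * (((m:ℝ) + 3) / (((m:ℝ) + 3) - β)) := by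
    intro m
    have h : 3 ≤ m + 2 + 1 := by omega
    rw [hP]
    simp only
    rw [show m + 2 + 1 = (m + 2) + 1 from rfl, Finset.prod_Icc_succ_top h]
    push_cast
    rw [show ((m:ℝ) + 2 + 1) = (m:ℝ) + 3 by ring]
  have hΓrec : ∀ m : ℕ, Γ (m + 2) = Γ (m + 1) * ((((m:ℝ) + 3) - β) / ((m:ℝ) + 3)) := by
    intro m
    rw [hΓ (m+2) (by omega), hΓ (m+1) (by omega)]
    have h : 3 ≤ m + 2 + 1 := by omega
    rw [show m + 2 + 1 = (m + 2) + 1 from rfl, Finset.prod_Icc_succ_top h]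
    push_cast
    rw [show ((m:ℝ) + 2 + 1) = (m:ℝ) + 3 by ring]
  -- telescoping term identity
  have hterm : ∀ k : ℕ, 2 ≤ k → β / (((k:ℝ) + 1) * Γ k) = P k - P (k - 1) := by
    intro k hk
    obtain ⟨m, rfl⟩ : ∃ m, k = m + 2 := ⟨k - 2, by omega⟩
    have hsub : m + 2 - 1 = m + 1 := by omega
    rw [hsub]
    have hΓ1 := hΓpos (m+1) (by omega)
    have hP1 := hPpos (m+1)
    have hmul := hΓP (m+1) (by omega)
    have hd : (0:ℝ) < ((m:ℝ) + 3) - β := by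
      have : (0:ℝ) ≤ (m:ℝ) := Nat.cast_nonneg m
      linarith
    have hm3 : (0:ℝ) < (m:ℝ) + 3 := by positivity
    rw [hΓrec m, hPrec m]
    have hPinv : P (m+1) = (Γ (m+1))⁻¹ := by
      field_simp
      linarith [hmul]
    rw [hPinv]
    push_cast
    field_simp
    ring
  -- sum equals P (N+1) - 1
  have hsum : ∀ M : ℕ, 1 ≤ M →
      (∑ k ∈ Finset.Icc 2 (M + 1), β / (((k : ℝ) + 1) * Γ k)) = P (M + 1) - 1 := by
    intro M hM
    induction M with
    | zero => omega
    | succ n ih =>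
      rcases Nat.eq_or_lt_of_le hM with h1 | h1
      · have hn : n = 0 := by omega
        subst hn
        rw [show (0:ℕ) + 1 + 1 = 2 from rfl, Finset.Icc_self, Finset.sum_singleton,
          hterm 2 le_rfl]
        have hP1 : P 1 = 1 := by rw [hP]; simp
        norm_num [hP1]
      · have hn : 1 ≤ n := by omega
        rw [Finset.sum_Icc_succ_top (by omega : 2 ≤ n + 1 + 1), ih hn,
          hterm (n + 1 + 1) (by omega)]
        have hsub : n + 1 + 1 - 1 = n + 1 := by omega
        rw [hsub]
        ring
  rw [hsum N hN]
  -- bound P (N+1) ≤ ((N+2)/2)^β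
  have hPbound : P (N + 1) ≤ (((N:ℝ) + 2) / 2) ^ β := by
    have hstep : P (N + 1) ≤ ∏ s ∈ Finset.Icc 3 (N + 2), ((s:ℝ) / ((s:ℝ) - 1)) ^ β := by
      rw [hP]
      simp only
      apply Finset.prod_le_prod
      · intro s hs
        simp only [Finset.mem_Icc] at hs
        exact le_of_lt (div_pos (hspos s hs.1) (hfacpos s hs.1))
      · intro s hs
        simp only [Finset.mem_Icc] at hs
        have h3 : (3:ℝ) ≤ (s:ℝ) := by exact_mod_cast hs.1
        have hs0 : (0:ℝ) < s := by linarith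
        have hs1 : (0:ℝ) < (s:ℝ) - 1 := by linarith
        have hsβ : (0:ℝ) < (s:ℝ) - β := by linarith
        have key : (((s:ℝ) - 1) / s) ^ β ≤ ((s:ℝ) - β) / s := by
          have h := rpow_one_add_le_one_add_mul_self
            (s := -(1/(s:ℝ))) (by
              rw [neg_le, neg_neg, div_le_one hs0]; linarith)
            (p := β) hβ0.le hβ1.le
          have e1 : (1 : ℝ) + -(1/(s:ℝ)) = ((s:ℝ) - 1) / s := by field_simp; ring
          have e2 : (1 : ℝ) + β * -(1/(s:ℝ)) = ((s:ℝ) - β) / s := by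
            field_simp; ring
          rw [e1, e2] at h
          exact h
        have hl : (0:ℝ) < (((s:ℝ) - 1) / s) ^ β := by positivity
        calc (s:ℝ) / ((s:ℝ) - β) = (((s:ℝ) - β) / s)⁻¹ := by rw [inv_div]
          _ ≤ ((((s:ℝ) - 1) / s) ^ β)⁻¹ := by
              apply inv_anti₀ hl key
          _ = ((s:ℝ) / ((s:ℝ) - 1)) ^ β := by
              rw [← Real.inv_rpow (by positivity), inv_div]
    refine hstep.trans ?_
    rw [Real.finset_prod_rpow _ _ (fun s hs => by
      simp only [Finset.mem_Icc] at hs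
      have h3 : (3:ℝ) ≤ (s:ℝ) := by exact_mod_cast hs.1
      have : (0:ℝ) < (s:ℝ) - 1 := by linarith
      positivity)]
    apply Real.rpow_le_rpow (Finset.prod_nonneg (fun s hs => by
      simp only [Finset.mem_Icc] at hs
      have h3 : (3:ℝ) ≤ (s:ℝ) := by exact_mod_cast hs.1
      have h4 : (0:ℝ) < (s:ℝ) - 1 := by linarith
      positivity)) ?_ hβ0.le
    have htel : ∀ M : ℕ, 1 ≤ M →
        (∏ s ∈ Finset.Icc 3 (M + 2), ((s:ℝ) / ((s:ℝ) - 1))) = ((M:ℝ) + 2) / 2 := by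
      intro M hM
      induction M with
      | zero => omega
      | succ n ih =>
        rcases Nat.eq_or_lt_of_le hM with h1 | h1
        · have hn : n = 0 := by omega
          subst hn
          norm_num [Finset.Icc_self]
        · have hn : 1 ≤ n := by omega
          rw [show n + 1 + 2 = (n + 2) + 1 from rfl,
            Finset.prod_Icc_succ_top (by omega : 3 ≤ n + 2 + 1), ih hn]
          have hpos : (0:ℝ) < (n:ℝ) + 2 := by positivity
          push_cast
          have hne : (n:ℝ) + 2 + 1 - 1 ≠ 0 := by linarith
          field_simp
          ring
    rw [htel N hN]
  linarith [hPbound]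
end
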